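/- Davis–Kahan overlap corollary: Let ρ and σ be density operators with H = σ − ρ and ‖H‖₁ ≤ 2ε. Fix an index i and let u_i, v_i be unit eigenvectors of ρ and σ for their i-th largest eigenvalues. Suppose δ_i := min{λ_i(σ) − λ_{i+1}(σ) − ε, λ_{i−1}(σ) − λ_i(σ) − ε} > 0. Then the fidelity satisfies |⟨u_i, v_i⟩|² ≥ 1 − ε²/δ_i². -/

import Mathlib

open Matrix ComplexOrder

/-- The trace norm `‖A‖₁ = Tr √(AᴴA)` of a complex matrix. -/
noncomputable def traceNorm {d : ℕ} (A : Matrix (Fin d) (Fin d) ℂ) : ℝ :=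
  ((Matrix.posSemidef_conjTranspose_mul_self A).1.eigenvectorUnitary.1 *
    diagonal (((↑) : ℝ → ℂ) ∘ (√·) ∘ (Matrix.posSemidef_conjTranspose_mul_self A).1.eigenvalues) *
    (star (Matrix.posSemidef_conjTranspose_mul_self A).1.eigenvectorUnitary :
      Matrix (Fin d) (Fin d) ℂ)).trace.re



local notation "⟪" x ", " y "⟫" => inner (𝕜 := ℂ) x y

variable {d : ℕ}

/-- inner against an eigenbasis vector of a symmetric map. -/
lemma aux_inner_basis (T : EuclideanSpace ℂ (Fin d) →ₗ[ℂ] EuclideanSpace ℂ (Fin d))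
    (hT : ∀ x y, ⟪T x, y⟫ = ⟪x, T y⟫)
    (f : OrthonormalBasis (Fin d) ℂ (EuclideanSpace ℂ (Fin d))) (a : Fin d → ℝ)
    (hf : ∀ j, T (f j) = (a j : ℂ) • f j) (x : EuclideanSpace ℂ (Fin d)) (j : Fin d) :
    ⟪f j, T x⟫ = (a j : ℂ) * ⟪f j, x⟫ := by
  rw [← hT, hf, inner_smul_left]
  simp

lemma aux_quadform (T : EuclideanSpace ℂ (Fin d) →ₗ[ℂ] EuclideanSpace ℂ (Fin d))
    (hT : ∀ x y, ⟪T x, y⟫ = ⟪x, T y⟫)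
    (f : OrthonormalBasis (Fin d) ℂ (EuclideanSpace ℂ (Fin d))) (a : Fin d → ℝ)
    (hf : ∀ j, T (f j) = (a j : ℂ) • f j) (x : EuclideanSpace ℂ (Fin d)) :
    ⟪x, T x⟫ = ((∑ j, a j * ‖⟪f j, x⟫‖ ^ 2 : ℝ) : ℂ) := by
  rw [← OrthonormalBasis.sum_inner_mul_inner f]
  push_cast
  refine Finset.sum_congr rfl fun j _ => ?_
  rw [aux_inner_basis T hT f a hf, ← inner_conj_symm x (f j)]
  have hc : (starRingEnd ℂ) ⟪f j, x⟫ * ⟪f j, x⟫ = ((‖⟪f j, x⟫‖ : ℂ)) ^ 2 := RCLike.conj_mul _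
  calc (starRingEnd ℂ) ⟪f j, x⟫ * ((a j : ℂ) * ⟪f j, x⟫)
      = (a j : ℂ) * ((starRingEnd ℂ) ⟪f j, x⟫ * ⟪f j, x⟫) := by ring
    _ = _ := by rw [hc]

lemma aux_parseval (f : OrthonormalBasis (Fin d) ℂ (EuclideanSpace ℂ (Fin d)))
    (x : EuclideanSpace ℂ (Fin d)) :
    ‖x‖ ^ 2 = ∑ j, ‖⟪f j, x⟫‖ ^ 2 := by
  have h := OrthonormalBasis.sum_inner_mul_inner f x x
  have : (⟪x, x⟫ : ℂ) = ((‖x‖ ^ 2 : ℝ) : ℂ) := by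
    rw [inner_self_eq_norm_sq_to_K]; norm_cast
  rw [this] at h
  have h2 : ∀ j, (⟪x, f j⟫ : ℂ) * ⟪f j, x⟫ = ((‖⟪f j, x⟫‖ ^ 2 : ℝ) : ℂ) := by
    intro j
    rw [← inner_conj_symm x (f j), RCLike.conj_mul]
    norm_cast
  simp_rw [h2] at h
  exact_mod_cast h.symm

lemma aux_norm_sub (T : EuclideanSpace ℂ (Fin d) →ₗ[ℂ] EuclideanSpace ℂ (Fin d))
    (hT : ∀ x y, ⟪T x, y⟫ = ⟪x, T y⟫)
    (f : OrthonormalBasis (Fin d) ℂ (EuclideanSpace ℂ (Fin d))) (a : Fin d → ℝ)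
    (hf : ∀ j, T (f j) = (a j : ℂ) • f j) (x : EuclideanSpace ℂ (Fin d)) (t : ℝ) :
    ‖T x - (t : ℂ) • x‖ ^ 2 = ∑ j, (a j - t) ^ 2 * ‖⟪f j, x⟫‖ ^ 2 := by
  rw [aux_parseval f]
  refine Finset.sum_congr rfl fun j _ => ?_
  have h : ⟪f j, T x - (t : ℂ) • x⟫ = ((a j - t : ℝ) : ℂ) * ⟪f j, x⟫ := by
    rw [inner_sub_right, aux_inner_basis T hT f a hf, inner_smul_right]
    push_cast; ring
  rw [h, norm_mul, mul_pow, Complex.norm_real, Real.norm_eq_abs, sq_abs]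

lemma aux_span_inner_zero (f : OrthonormalBasis (Fin d) ℂ (EuclideanSpace ℂ (Fin d)))
    (s : Set (Fin d)) (x : EuclideanSpace ℂ (Fin d))
    (hx : x ∈ Submodule.span ℂ (f '' s)) (k : Fin d) (hk : k ∉ s) :
    ⟪f k, x⟫ = 0 := by
  induction hx using Submodule.span_induction with
  | mem y hy =>
    obtain ⟨j, hj, rfl⟩ := hy
    exact f.orthonormal.2 (fun h : k = j => hk (h ▸ hj))
  | zero => exact inner_zero_right _
  | add y z _ _ hy hz => rw [inner_add_right, hy, hz, add_zero]
  | smul c y _ hy => rw [inner_smul_right, hy, mul_zero]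

lemma aux_rayleigh_ge (T : EuclideanSpace ℂ (Fin d) →ₗ[ℂ] EuclideanSpace ℂ (Fin d))
    (hT : ∀ x y, ⟪T x, y⟫ = ⟪x, T y⟫)
    (f : OrthonormalBasis (Fin d) ℂ (EuclideanSpace ℂ (Fin d))) (a : Fin d → ℝ)
    (hf : ∀ j, T (f j) = (a j : ℂ) • f j) (ha : Antitone a) (i : Fin d)
    (x : EuclideanSpace ℂ (Fin d)) (hx : x ∈ Submodule.span ℂ (f '' Set.Iic i)) :
    a i * ‖x‖ ^ 2 ≤ (⟪x, T x⟫).re := by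
  rw [aux_quadform T hT f a hf x, Complex.ofReal_re, aux_parseval f x, Finset.mul_sum]
  refine Finset.sum_le_sum fun j _ => ?_
  by_cases hj : j ∈ Set.Iic i
  · exact mul_le_mul_of_nonneg_right (ha hj) (sq_nonneg _)
  · rw [aux_span_inner_zero f _ x hx j hj]
    simp

lemma aux_rayleigh_le (T : EuclideanSpace ℂ (Fin d) →ₗ[ℂ] EuclideanSpace ℂ (Fin d))
    (hT : ∀ x y, ⟪T x, y⟫ = ⟪x, T y⟫)
    (f : OrthonormalBasis (Fin d) ℂ (EuclideanSpace ℂ (Fin d))) (a : Fin d → ℝ)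
    (hf : ∀ j, T (f j) = (a j : ℂ) • f j) (ha : Antitone a) (i : Fin d)
    (x : EuclideanSpace ℂ (Fin d)) (hx : x ∈ Submodule.span ℂ (f '' Set.Ici i)) :
    (⟪x, T x⟫).re ≤ a i * ‖x‖ ^ 2 := by
  rw [aux_quadform T hT f a hf x, Complex.ofReal_re, aux_parseval f x, Finset.mul_sum]
  refine Finset.sum_le_sum fun j _ => ?_
  by_cases hj : j ∈ Set.Ici i
  · exact mul_le_mul_of_nonneg_right (ha hj) (sq_nonneg _)
  · rw [aux_span_inner_zero f _ x hx j hj]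
    simp

lemma aux_span_finrank (f : OrthonormalBasis (Fin d) ℂ (EuclideanSpace ℂ (Fin d)))
    (s : Set (Fin d)) [Fintype s] :
    Module.finrank ℂ (Submodule.span ℂ (f '' s)) = Fintype.card s := by
  have hli : LinearIndependent ℂ (fun j : s => f (j : Fin d)) :=
    (f.orthonormal.comp _ Subtype.val_injective).linearIndependent
  have hr : Set.range (fun j : s => f (j : Fin d)) = f '' s := by
    rw [show (fun j : s => f (j : Fin d)) = f ∘ ((↑) : s → Fin d) from rfl,
      Set.range_comp, Subtype.range_coe]
  rw [← hr, finrank_span_eq_card hli]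

/-- One-sided Weyl inequality. -/
lemma aux_weyl (S T : EuclideanSpace ℂ (Fin d) →ₗ[ℂ] EuclideanSpace ℂ (Fin d))
    (hS : ∀ x y, ⟪S x, y⟫ = ⟪x, S y⟫) (hT : ∀ x y, ⟪T x, y⟫ = ⟪x, T y⟫)
    (f g : OrthonormalBasis (Fin d) ℂ (EuclideanSpace ℂ (Fin d))) (a b : Fin d → ℝ)
    (hfa : ∀ j, S (f j) = (a j : ℂ) • f j) (hgb : ∀ j, T (g j) = (b j : ℂ) • g j)
    (ha : Antitone a) (hb : Antitone b) (ε : ℝ)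
    (hST : ∀ x, ‖S x - T x‖ ≤ ε * ‖x‖) (i : Fin d) : a i ≤ b i + ε := by
  classical
  set U1 := Submodule.span ℂ (f '' Set.Iic i) with hU1
  set U2 := Submodule.span ℂ (g '' Set.Ici i) with hU2
  have hc1 : Module.finrank ℂ U1 = (i : ℕ) + 1 := by
    rw [hU1, aux_span_finrank, Fintype.card_ofFinset, Fin.card_Iic]; simp
  have hc2 : Module.finrank ℂ U2 = d - (i : ℕ) := by
    rw [hU2, aux_span_finrank, Fintype.card_ofFinset, Fin.card_Ici]; simp
  have hsup : Module.finrank ℂ (U1 ⊔ U2 : Submodule ℂ (EuclideanSpace ℂ (Fin d))) ≤ d := by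
    have := Submodule.finrank_le (U1 ⊔ U2 : Submodule ℂ (EuclideanSpace ℂ (Fin d)))
    rwa [finrank_euclideanSpace, Fintype.card_fin] at this
  have hdim : 0 < Module.finrank ℂ (U1 ⊓ U2 : Submodule ℂ (EuclideanSpace ℂ (Fin d))) := by
    have hkey := Submodule.finrank_sup_add_finrank_inf_eq U1 U2
    have hi := i.isLt
    omega
  obtain ⟨x, hx0⟩ := Module.finrank_pos_iff_exists_ne_zero.mp hdim
  have hy1 : (x : EuclideanSpace ℂ (Fin d)) ∈ U1 := x.2.1
  have hy2 : (x : EuclideanSpace ℂ (Fin d)) ∈ U2 := x.2.2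
  set y := (x : EuclideanSpace ℂ (Fin d))
  have hy0 : y ≠ 0 := fun h => hx0 (Subtype.ext h)
  have h1 := aux_rayleigh_ge S hS f a hfa ha i y hy1
  have h2 := aux_rayleigh_le T hT g b hgb hb i y hy2
  have h3 : (⟪y, S y⟫).re - (⟪y, T y⟫).re ≤ ε * ‖y‖ ^ 2 := by
    have e1 : (⟪y, S y⟫ : ℂ) - ⟪y, T y⟫ = ⟪y, S y - T y⟫ := (inner_sub_right _ _ _).symm
    have e2 : ((⟪y, S y⟫ : ℂ) - ⟪y, T y⟫).re ≤ ‖(⟪y, S y - T y⟫ : ℂ)‖ := by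
      rw [e1]; exact (Complex.re_le_norm _)
    calc (⟪y, S y⟫).re - (⟪y, T y⟫).re ≤ ‖(⟪y, S y - T y⟫ : ℂ)‖ := by
          simpa [Complex.sub_re] using e2
      _ ≤ ‖y‖ * ‖S y - T y‖ := norm_inner_le_norm _ _
      _ ≤ ‖y‖ * (ε * ‖y‖) := by
          refine mul_le_mul_of_nonneg_left (hST y) (norm_nonneg _)
      _ = ε * ‖y‖ ^ 2 := by ring
  have hn : 0 < ‖y‖ ^ 2 := by have := norm_pos_iff.mpr hy0; positivity
  nlinarith [h1, h2, h3]



lemma aux_conj_mul (U : unitary (Matrix (Fin d) (Fin d) ℂ)) (F G : Fin d → ℂ) :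
    ((U : Matrix (Fin d) (Fin d) ℂ) * diagonal F * star (U : Matrix (Fin d) (Fin d) ℂ)) *
      ((U : Matrix (Fin d) (Fin d) ℂ) * diagonal G * star (U : Matrix (Fin d) (Fin d) ℂ)) =
    (U : Matrix (Fin d) (Fin d) ℂ) * diagonal (fun j => F j * G j) *
      star (U : Matrix (Fin d) (Fin d) ℂ) := by
  have h1 : star (U : Matrix (Fin d) (Fin d) ℂ) * (U : Matrix (Fin d) (Fin d) ℂ) = 1 :=
    Unitary.coe_star_mul_self U
  rw [← diagonal_mul_diagonal]
  simp only [Matrix.mul_assoc]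
  rw [show star (U : Matrix (Fin d) (Fin d) ℂ) * ((U : Matrix (Fin d) (Fin d) ℂ) *
    (diagonal G * star (U : Matrix (Fin d) (Fin d) ℂ))) =
      diagonal G * star (U : Matrix (Fin d) (Fin d) ℂ) from by
    rw [← Matrix.mul_assoc, h1, one_mul]]

open scoped MatrixOrder in
lemma aux_traceNorm_eq (H : Matrix (Fin d) (Fin d) ℂ) (hH : H.IsHermitian) :
    traceNorm H = ∑ j, |hH.eigenvalues j| := by
  classical
  set U : Matrix (Fin d) (Fin d) ℂ := ↑(hH.eigenvectorUnitary) with hUdef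
  have h1 : star U * U = 1 := Unitary.coe_star_mul_self _
  set D : Matrix (Fin d) (Fin d) ℂ := diagonal (fun j => ((|hH.eigenvalues j| : ℝ) : ℂ)) with hDdef
  set M := U * D * star U with hM
  have hDpsd : D.PosSemidef := by
    refine posSemidef_diagonal_iff.mpr fun j => ?_
    exact Complex.zero_le_real.mpr (abs_nonneg _)
  have hMpsd : M.PosSemidef := hDpsd.mul_mul_conjTranspose_same U
  have hM2 : M ^ 2 = Hᴴ * H := by
    rw [pow_two, hM, hDdef, aux_conj_mul, hH.eq]
    conv_rhs => rw [hH.spectral_theorem, Unitary.conjStarAlgAut_apply, aux_conj_mul]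
    refine congrArg₂ _ (congrArg _ (congrArg diagonal (funext fun j => ?_))) rfl
    simp only [Function.comp_apply]
    norm_cast
    rw [abs_mul_abs_self]
    rfl
  have hsqrt : M = (posSemidef_conjTranspose_mul_self H).1.eigenvectorUnitary.1 *
      diagonal (((↑) : ℝ → ℂ) ∘ (√·) ∘ (posSemidef_conjTranspose_mul_self H).1.eigenvalues) *
      (star (posSemidef_conjTranspose_mul_self H).1.eigenvectorUnitary :
        Matrix (Fin d) (Fin d) ℂ) := by
    have hA := posSemidef_conjTranspose_mul_self H
    change M = hA.1.cfc Real.sqrt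
    rw [← hA.1.cfc_eq, ← cfcₙ_eq_cfc, ← CFC.sqrt_eq_real_sqrt _ hA.nonneg]
    exact (CFC.sqrt_unique (by rw [← pow_two]; exact hM2) hMpsd.nonneg).symm
  rw [traceNorm, ← hsqrt, hM, trace_mul_cycle, h1, one_mul, hDdef, trace_diagonal]
  rw [Complex.re_sum]
  simp

lemma aux_trace_eq (H : Matrix (Fin d) (Fin d) ℂ) (hH : H.IsHermitian) :
    H.trace = ((∑ j, hH.eigenvalues j : ℝ) : ℂ) := by
  conv_lhs => rw [hH.spectral_theorem]
  rw [Unitary.conjStarAlgAut_apply, trace_mul_cycle, Unitary.coe_star_mul_self, one_mul, trace_diagonal]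
  push_cast
  rfl

lemma aux_eig_bound (H : Matrix (Fin d) (Fin d) ℂ) (hH : H.IsHermitian) (ε : ℝ)
    (htr : H.trace = 0) (htn : traceNorm H ≤ 2 * ε) (j : Fin d) :
    |hH.eigenvalues j| ≤ ε := by
  set e := hH.eigenvalues with he
  have hsum0 : ∑ k, e k = 0 := by
    have h := aux_trace_eq H hH
    rw [htr] at h
    exact_mod_cast h.symm
  have habs : ∑ k, |e k| ≤ 2 * ε := by rw [← aux_traceNorm_eq H hH]; exact htn
  have hP : e j ≤ ε := by
    have h1 : (|e j| + e j) / 2 ≤ ∑ k, (|e k| + e k) / 2 := by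
      refine Finset.single_le_sum (f := fun k => (|e k| + e k) / 2) (fun k _ => ?_) (Finset.mem_univ j)
      have := neg_abs_le (e k); linarith
    have h2 : ∑ k, (|e k| + e k) / 2 = ((∑ k, |e k|) + ∑ k, e k) / 2 := by
      rw [← Finset.sum_add_distrib, ← Finset.sum_div]
    have h3 := le_abs_self (e j)
    rw [h2, hsum0] at h1
    linarith
  have hN : -e j ≤ ε := by
    have h1 : (|e j| - e j) / 2 ≤ ∑ k, (|e k| - e k) / 2 := by
      refine Finset.single_le_sum (f := fun k => (|e k| - e k) / 2) (fun k _ => ?_) (Finset.mem_univ j)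
      have := le_abs_self (e k); linarith
    have h2 : ∑ k, (|e k| - e k) / 2 = ((∑ k, |e k|) - ∑ k, e k) / 2 := by
      rw [← Finset.sum_sub_distrib, ← Finset.sum_div]
    have h3 := neg_abs_le (e j)
    rw [h2, hsum0] at h1
    linarith
  exact abs_le.mpr ⟨by linarith, hP⟩


lemma aux_eigenbasis_apply (H : Matrix (Fin d) (Fin d) ℂ) (hH : H.IsHermitian) (j : Fin d) :
    Matrix.toEuclideanLin H (hH.eigenvectorBasis j) =
      ((hH.eigenvalues j : ℝ) : ℂ) • hH.eigenvectorBasis j := by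
  have h := hH.mulVec_eigenvectorBasis j
  apply (WithLp.equiv 2 (Fin d → ℂ)).injective
  simp only [toEuclideanLin_apply]
  simp only [WithLp.equiv_apply, WithLp.ofLp_toLp, WithLp.ofLp_smul]
  rw [h]
  ext k
  simp [Complex.real_smul]

lemma aux_opbound (H : Matrix (Fin d) (Fin d) ℂ) (hH : H.IsHermitian) (ε : ℝ) (hε : 0 ≤ ε)
    (hb : ∀ j, |hH.eigenvalues j| ≤ ε) (x : EuclideanSpace ℂ (Fin d)) :
    ‖Matrix.toEuclideanLin H x‖ ≤ ε * ‖x‖ := by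
  have hsym : ∀ a b : EuclideanSpace ℂ (Fin d),
      ⟪Matrix.toEuclideanLin H a, b⟫ = ⟪a, Matrix.toEuclideanLin H b⟫ :=
    fun a b => (Matrix.isHermitian_iff_isSymmetric.mp hH) a b
  have hf := aux_eigenbasis_apply H hH
  have key : ‖Matrix.toEuclideanLin H x‖ ^ 2 ≤ (ε * ‖x‖) ^ 2 := by
    have h0 : Matrix.toEuclideanLin H x - ((0 : ℝ) : ℂ) • x = Matrix.toEuclideanLin H x := by
      simp
    calc ‖Matrix.toEuclideanLin H x‖ ^ 2
        = ∑ j, (hH.eigenvalues j - 0) ^ 2 * ‖⟪hH.eigenvectorBasis j, x⟫‖ ^ 2 := by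
          rw [← h0]
          exact aux_norm_sub _ hsym _ _ hf x 0
      _ ≤ ∑ j, ε ^ 2 * ‖⟪hH.eigenvectorBasis j, x⟫‖ ^ 2 := by
          refine Finset.sum_le_sum fun j _ => ?_
          refine mul_le_mul_of_nonneg_right ?_ (sq_nonneg _)
          rw [sub_zero, ← sq_abs]
          exact pow_le_pow_left₀ (abs_nonneg _) (hb j) 2
      _ = (ε * ‖x‖) ^ 2 := by
          rw [← Finset.mul_sum, ← aux_parseval, mul_pow]
  have h1 : 0 ≤ ε * ‖x‖ := by positivity
  nlinarith [norm_nonneg (Matrix.toEuclideanLin H x)]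

/-- Davis–Kahan overlap corollary: Let `ρ`, `σ` be density operators with
`H = σ − ρ`, `‖H‖₁ ≤ 2ε`.  Let `u`, `v` be unit eigenvectors of `ρ` and `σ` for their
`i`-th largest eigenvalues (sorted enumerations `eρ`, `eσ`).  If
`δ = min{λ_i(σ) − λ_{i+1}(σ) − ε, λ_{i−1}(σ) − λ_i(σ) − ε} > 0`, then
`|⟨u, v⟩|² ≥ 1 − ε²/δ²`. -/
theorem davis_kahan_overlap {d : ℕ}
    (ρ σ : Matrix (Fin d) (Fin d) ℂ) (ε : ℝ) (hε : 0 ≤ ε)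
    (hρ : ρ.PosSemidef) (hσ : σ.PosSemidef)
    (hρtr : ρ.trace = 1) (hσtr : σ.trace = 1)
    (hH : traceNorm (σ - ρ) ≤ 2 * ε)
    (eρ eσ : Fin d → ℝ)
    (hρanti : Antitone eρ) (hσanti : Antitone eσ)
    (hρeig : ∃ e : Equiv.Perm (Fin d), eρ = hρ.1.eigenvalues ∘ e)
    (hσeig : ∃ e : Equiv.Perm (Fin d), eσ = hσ.1.eigenvalues ∘ e)
    (i : Fin d) (hi0 : 0 < (i : ℕ)) (hi1 : (i : ℕ) + 1 < d)
    (u v : EuclideanSpace ℂ (Fin d)) (hu : ‖u‖ = 1) (hv : ‖v‖ = 1)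
    (huEig : ρ.mulVec ((WithLp.equiv 2 (Fin d → ℂ)) u) =
      (eρ i : ℂ) • (WithLp.equiv 2 (Fin d → ℂ)) u)
    (hvEig : σ.mulVec ((WithLp.equiv 2 (Fin d → ℂ)) v) =
      (eσ i : ℂ) • (WithLp.equiv 2 (Fin d → ℂ)) v)
    (δ : ℝ)
    (hδdef : δ = min (eσ i - eσ ⟨(i : ℕ) + 1, hi1⟩ - ε)
      (eσ ⟨(i : ℕ) - 1, lt_of_le_of_lt (Nat.sub_le _ _) i.isLt⟩ - eσ i - ε))
    (hδ : 0 < δ) :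
    1 - ε ^ 2 / δ ^ 2 ≤ ‖inner (𝕜 := ℂ) u v‖ ^ 2 := by
  classical
  set i1 : Fin d := ⟨(i : ℕ) + 1, hi1⟩ with hi1def
  set i0 : Fin d := ⟨(i : ℕ) - 1, lt_of_le_of_lt (Nat.sub_le _ _) i.isLt⟩ with hi0def
  have hδ1 : δ ≤ eσ i - eσ i1 - ε := hδdef ▸ min_le_left _ _
  have hδ2 : δ ≤ eσ i0 - eσ i - ε := hδdef ▸ min_le_right _ _
  -- The difference operator
  have hHherm : (σ - ρ).IsHermitian := hσ.1.sub hρ.1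
  have htr0 : (σ - ρ).trace = 0 := by rw [trace_sub, hρtr, hσtr, sub_self]
  have hop : ∀ x : EuclideanSpace ℂ (Fin d),
      ‖Matrix.toEuclideanLin (σ - ρ) x‖ ≤ ε * ‖x‖ :=
    aux_opbound (σ - ρ) hHherm ε hε (aux_eig_bound (σ - ρ) hHherm ε htr0 hH)
  set S := Matrix.toEuclideanLin σ with hSdef
  set T := Matrix.toEuclideanLin ρ with hTdef
  have hST : ∀ x : EuclideanSpace ℂ (Fin d), ‖S x - T x‖ ≤ ε * ‖x‖ := by
    intro x
    have : S x - T x = Matrix.toEuclideanLin (σ - ρ) x := by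
      rw [map_sub]; rfl
    rw [this]; exact hop x
  have hSsym : ∀ a b : EuclideanSpace ℂ (Fin d), ⟪S a, b⟫ = ⟪a, S b⟫ :=
    fun a b => (Matrix.isHermitian_iff_isSymmetric.mp hσ.1) a b
  have hTsym : ∀ a b : EuclideanSpace ℂ (Fin d), ⟪T a, b⟫ = ⟪a, T b⟫ :=
    fun a b => (Matrix.isHermitian_iff_isSymmetric.mp hρ.1) a b
  -- Sorted eigenbases
  obtain ⟨p, hp⟩ := hσeig
  obtain ⟨q, hq⟩ := hρeig
  set f : OrthonormalBasis (Fin d) ℂ (EuclideanSpace ℂ (Fin d)) :=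
    hσ.1.eigenvectorBasis.reindex p.symm with hfdef
  set g : OrthonormalBasis (Fin d) ℂ (EuclideanSpace ℂ (Fin d)) :=
    hρ.1.eigenvectorBasis.reindex q.symm with hgdef
  have hfσ : ∀ j, S (f j) = ((eσ j : ℝ) : ℂ) • f j := by
    intro j
    rw [hfdef, OrthonormalBasis.reindex_apply, Equiv.symm_symm, hp]
    exact aux_eigenbasis_apply σ hσ.1 (p j)
  have hgρ : ∀ j, T (g j) = ((eρ j : ℝ) : ℂ) • g j := by
    intro j
    rw [hgdef, OrthonormalBasis.reindex_apply, Equiv.symm_symm, hq]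
    exact aux_eigenbasis_apply ρ hρ.1 (q j)
  -- Weyl inequalities
  have w1 : eσ i ≤ eρ i + ε := aux_weyl S T hSsym hTsym f g eσ eρ hfσ hgρ hσanti hρanti ε hST i
  have w2 : eρ i ≤ eσ i + ε := by
    refine aux_weyl T S hTsym hSsym g f eρ eσ hgρ hfσ hρanti hσanti ε (fun x => ?_) i
    rw [norm_sub_rev]; exact hST x
  -- eigenvector equations in linear map form
  have hu' : T u = ((eρ i : ℝ) : ℂ) • u := by
    rw [hTdef]
    apply (WithLp.equiv 2 (Fin d → ℂ)).injective
    simp only [toEuclideanLin_apply, Equiv.apply_symm_apply, WithLp.equiv_apply, WithLp.ofLp_toLp, WithLp.ofLp_smul]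
    exact huEig
  have hv' : S v = ((eσ i : ℝ) : ℂ) • v := by
    rw [hSdef]
    apply (WithLp.equiv 2 (Fin d → ℂ)).injective
    simp only [toEuclideanLin_apply, Equiv.apply_symm_apply, WithLp.equiv_apply, WithLp.ofLp_toLp, WithLp.ofLp_smul]
    exact hvEig
  -- residual bound
  have hres : ‖S u - ((eρ i : ℝ) : ℂ) • u‖ ≤ ε := by
    rw [← hu']
    calc ‖S u - T u‖ ≤ ε * ‖u‖ := hST u
      _ = ε := by rw [hu, mul_one]
  have hsum : ∑ j, (eσ j - eρ i) ^ 2 * ‖⟪f j, u⟫‖ ^ 2 ≤ ε ^ 2 := by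
    rw [← aux_norm_sub S hSsym f eσ hfσ u (eρ i)]
    have h0 : (0 : ℝ) ≤ ‖S u - ((eρ i : ℝ) : ℂ) • u‖ := norm_nonneg _
    nlinarith [hres]
  -- gap bound
  have hgap : ∀ j : Fin d, j ≠ i → δ ^ 2 ≤ (eσ j - eρ i) ^ 2 := by
    intro j hj
    rcases lt_or_gt_of_ne hj with hlt | hgt
    · -- j < i, so j ≤ i0 and eσ j ≥ eσ i0
      have hltn : (j : ℕ) < (i : ℕ) := hlt
      have hj0 : j ≤ i0 := by
        rw [Fin.le_def]; simp only [hi0def]; omega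
      have := hσanti hj0
      have h1 : δ ≤ eσ j - eρ i := by linarith
      have h2 : (eσ j - eρ i) ^ 2 = |eσ j - eρ i| ^ 2 := (sq_abs _).symm
      rw [h2]
      exact pow_le_pow_left₀ hδ.le (le_trans h1 (le_abs_self _)) 2
    · -- j > i, so i1 ≤ j and eσ j ≤ eσ i1
      have hgtn : (i : ℕ) < (j : ℕ) := hgt
      have hj1 : i1 ≤ j := by
        rw [Fin.le_def]; simp only [hi1def]; omega
      have := hσanti hj1
      have h1 : δ ≤ eρ i - eσ j := by linarith
      have h2 : (eσ j - eρ i) ^ 2 = |eρ i - eσ j| ^ 2 := by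
        rw [sq_abs]; ring
      rw [h2]
      exact pow_le_pow_left₀ hδ.le (le_trans h1 (le_abs_self _)) 2
  -- tail bound
  have htail : ∑ j ∈ Finset.univ.erase i, ‖⟪f j, u⟫‖ ^ 2 ≤ ε ^ 2 / δ ^ 2 := by
    rw [le_div_iff₀ (by positivity : (0:ℝ) < δ ^ 2)]
    calc (∑ j ∈ Finset.univ.erase i, ‖⟪f j, u⟫‖ ^ 2) * δ ^ 2
        = ∑ j ∈ Finset.univ.erase i, δ ^ 2 * ‖⟪f j, u⟫‖ ^ 2 := by
          rw [Finset.sum_mul]; exact Finset.sum_congr rfl fun j _ => by ring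
      _ ≤ ∑ j ∈ Finset.univ.erase i, (eσ j - eρ i) ^ 2 * ‖⟪f j, u⟫‖ ^ 2 := by
          refine Finset.sum_le_sum fun j hjmem => ?_
          exact mul_le_mul_of_nonneg_right (hgap j (Finset.ne_of_mem_erase hjmem))
            (sq_nonneg _)
      _ ≤ ∑ j, (eσ j - eρ i) ^ 2 * ‖⟪f j, u⟫‖ ^ 2 := by
          refine Finset.sum_le_sum_of_subset_of_nonneg (Finset.erase_subset _ _)
            fun j _ _ => by positivity
      _ ≤ ε ^ 2 := hsum
  -- v is colinear with f i
  have hvcoef : ∀ j : Fin d, j ≠ i → ⟪f j, v⟫ = 0 := by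
    intro j hj
    have h1 : ⟪f j, S v⟫ = ((eσ j : ℝ) : ℂ) * ⟪f j, v⟫ := aux_inner_basis S hSsym f eσ hfσ v j
    have h2 : ⟪f j, S v⟫ = ((eσ i : ℝ) : ℂ) * ⟪f j, v⟫ := by
      rw [hv', inner_smul_right]
    have hne : eσ j ≠ eσ i := by
      rcases lt_or_gt_of_ne hj with hlt | hgt
      · have hltn : (j : ℕ) < (i : ℕ) := hlt
        have hj0 : j ≤ i0 := by
          rw [Fin.le_def]; simp only [hi0def]; omega
        have := hσanti hj0
        intro h; rw [h] at this; linarith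
      · have hgtn : (i : ℕ) < (j : ℕ) := hgt
        have hj1 : i1 ≤ j := by
          rw [Fin.le_def]; simp only [hi1def]; omega
        have := hσanti hj1
        intro h; rw [h] at this; linarith
    have h3 : (((eσ j : ℝ) : ℂ) - ((eσ i : ℝ) : ℂ)) * ⟪f j, v⟫ = 0 := by
      rw [sub_mul, h1.symm.trans h2]; ring
    rcases mul_eq_zero.mp h3 with h4 | h4
    · exfalso
      apply hne
      have := sub_eq_zero.mp h4
      exact_mod_cast this
    · exact h4
  -- |⟪f i, v⟫| = 1
  have hfiv : ‖⟪f i, v⟫‖ ^ 2 = 1 := by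
    have hpv := aux_parseval f v
    rw [hv, one_pow] at hpv
    have hsingle : ∑ j, ‖⟪f j, v⟫‖ ^ 2 = ‖⟪f i, v⟫‖ ^ 2 :=
      Finset.sum_eq_single_of_mem i (Finset.mem_univ i)
        (fun j _ hj => by rw [hvcoef j hj]; simp)
    rw [← hsingle, ← hpv]
  have hinner : ⟪u, v⟫ = ⟪u, f i⟫ * ⟪f i, v⟫ := by
    rw [← OrthonormalBasis.sum_inner_mul_inner f u v]
    exact Finset.sum_eq_single_of_mem i (Finset.mem_univ i)
      (fun j _ hj => by rw [hvcoef j hj, mul_zero])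
  have hparsu := aux_parseval f u
  rw [hu, one_pow] at hparsu
  have hdecomp : ‖⟪f i, u⟫‖ ^ 2 + ∑ j ∈ Finset.univ.erase i, ‖⟪f j, u⟫‖ ^ 2 = 1 := by
    exact (Finset.add_sum_erase Finset.univ (fun j => ‖⟪f j, u⟫‖ ^ 2)
      (Finset.mem_univ i)).trans hparsu.symm
  have hfin : 1 - ε ^ 2 / δ ^ 2 ≤ ‖⟪f i, u⟫‖ ^ 2 := by linarith [htail]
  calc 1 - ε ^ 2 / δ ^ 2 ≤ ‖⟪f i, u⟫‖ ^ 2 := hfin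
    _ = ‖⟪u, f i⟫‖ ^ 2 := by rw [norm_inner_symm]
    _ = ‖⟪u, f i⟫‖ ^ 2 * ‖⟪f i, v⟫‖ ^ 2 := by rw [hfiv, mul_one]
    _ = ‖⟪u, v⟫‖ ^ 2 := by rw [hinner, norm_mul, mul_pow]
    _ = ‖⟪u, v⟫‖ ^ 2 := rfl
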